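/- A real random variable Z (with all relevant expectations finite) has the N(0,1) distribution if and only if E[Z f(Z) − f'(Z)] = 0 for every continuous, piecewise continuously differentiable function f with E|f'(N)| < ∞, where N ~ N(0,1). -/

import Mathlib

open MeasureTheory ProbabilityTheory Real Set Filter
open scoped ENNReal NNReal Topology


lemma pdf_eq (x : ℝ) : gaussianPDFReal 0 1 x = (√(2*π))⁻¹ * rexp (-x^2/2) := by
  simp [gaussianPDFReal]

lemma gauss_withDensity :
    gaussianReal 0 1 = volume.withDensity (fun x => ((gaussianPDFReal 0 1 x).toNNReal : ℝ≥0∞)) := by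
  rw [gaussianReal_of_var_ne_zero 0 one_ne_zero]; rfl

lemma integral_gauss_eq (g : ℝ → ℝ) :
    ∫ x, g x ∂(gaussianReal 0 1) = ∫ x, gaussianPDFReal 0 1 x * g x := by
  rw [gauss_withDensity,
    integral_withDensity_eq_integral_smul ((measurable_gaussianPDFReal 0 1).real_toNNReal) g]
  refine integral_congr_ae (Filter.Eventually.of_forall fun x => ?_)
  simp [NNReal.smul_def, Real.coe_toNNReal _ (gaussianPDFReal_nonneg 0 1 x)]

lemma integrable_gauss_iff (g : ℝ → ℝ) :
    Integrable g (gaussianReal 0 1) ↔ Integrable (fun x => gaussianPDFReal 0 1 x * g x) volume := by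
  rw [gauss_withDensity,
    integrable_withDensity_iff_integrable_smul ((measurable_gaussianPDFReal 0 1).real_toNNReal)]
  refine integrable_congr (Filter.Eventually.of_forall fun x => ?_)
  simp [NNReal.smul_def, Real.coe_toNNReal _ (gaussianPDFReal_nonneg 0 1 x)]

lemma ftc_finset (S : Finset ℝ) (F G : ℝ → ℝ) (hF : Continuous F)
    (hd : ∀ x ∉ S, HasDerivAt F (G x) x) (hG : Integrable G (volume : Measure ℝ)) :
    ∀ a b : ℝ, a ≤ b → ∫ y in a..b, G y = F b - F a := by
  have key : ∀ (T : Finset ℝ), ∀ a b : ℝ, a ≤ b →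
      (∀ x ∈ Ioo a b, x ∉ T → HasDerivAt F (G x) x) → ∫ y in a..b, G y = F b - F a := by
    intro T
    induction T using Finset.induction_on with
    | empty =>
      intro a b hab hder
      refine intervalIntegral.integral_eq_sub_of_hasDeriv_right_of_le hab
        hF.continuousOn (fun x hx => (hder x hx (by simp)).hasDerivWithinAt) ?_
      exact hG.intervalIntegrable
    | @insert s T hsT IH =>
      intro a b hab hder
      by_cases hs : s ∈ Ioo a b
      · have h1 : ∫ y in a..s, G y = F s - F a :=
          IH a s hs.1.le (fun x hx hxT => hder x ⟨hx.1, hx.2.trans hs.2⟩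
            (by simp [Finset.mem_insert, hxT, ne_of_lt hx.2]))
        have h2 : ∫ y in s..b, G y = F b - F s :=
          IH s b hs.2.le (fun x hx hxT => hder x ⟨hs.1.trans hx.1, hx.2⟩
            (by simp [Finset.mem_insert, hxT, (ne_of_gt hx.1)]))
        have hadd := intervalIntegral.integral_add_adjacent_intervals
          (hG.intervalIntegrable (a := a) (b := s)) (hG.intervalIntegrable (a := s) (b := b))
        rw [← hadd, h1, h2]; ring
      · exact IH a b hab (fun x hx hxT => hder x hx
          (by simp only [Finset.mem_insert, not_or]; exact ⟨fun he => hs (he ▸ hx), hxT⟩))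
  intro a b hab
  exact key S a b hab (fun x _ hx => hd x hx)


lemma exists_seq (F : ℝ → ℝ) (hF : Continuous F)
    (h1 : Integrable (fun x => x * F x) (volume : Measure ℝ)) :
    ∃ b : ℕ → ℝ, Tendsto b atTop atTop ∧ Tendsto (fun n => F (b n)) atTop (𝓝 0) := by
  have hq : Continuous fun x => |x * F x| := (continuous_id.mul hF).abs
  have hmin : ∀ n : ℕ, ∃ y ∈ Icc ((n:ℝ)+1) ((n:ℝ)+2),
      ∀ z ∈ Icc ((n:ℝ)+1) ((n:ℝ)+2), |y * F y| ≤ |z * F z| := by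
    intro n
    obtain ⟨y, hy, hmin⟩ := isCompact_Icc.exists_isMinOn
      (α := ℝ) (s := Icc ((n:ℝ)+1) ((n:ℝ)+2)) ⟨(n:ℝ)+1, by norm_num⟩ hq.continuousOn
    exact ⟨y, hy, fun z hz => hmin hz⟩
  choose b hb hble using hmin
  have hb1 : ∀ n : ℕ, (n:ℝ)+1 ≤ b n := fun n => (hb n).1
  have htop : Tendsto b atTop atTop := by
    apply tendsto_atTop_mono hb1
    exact tendsto_atTop_add_const_right _ 1 tendsto_natCast_atTop_atTop
  -- the tail integrals tend to 0
  set I : ℕ → ℝ := fun n => ∫ x in Icc ((n:ℝ)+1) ((n:ℝ)+2), |x * F x| with hI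
  have hItend : Tendsto I atTop (𝓝 0) := by
    have : ∀ n : ℕ, I n = ∫ x, (Icc ((n:ℝ)+1) ((n:ℝ)+2)).indicator (fun x => |x * F x|) x :=
      fun n => (integral_indicator measurableSet_Icc).symm
    rw [show (0:ℝ) = ∫ (x:ℝ), (0:ℝ) by simp]
    refine Tendsto.congr (fun n => (this n).symm) ?_
    apply tendsto_integral_of_dominated_convergence (fun x => |x * F x|)
    · exact fun n => (hq.aestronglyMeasurable).indicator measurableSet_Icc
    · exact h1.abs
    · intro n
      refine Filter.Eventually.of_forall fun x => ?_
      by_cases hx : x ∈ Icc ((n:ℝ)+1) ((n:ℝ)+2) <;>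
        simp [Set.indicator_apply, hx, abs_nonneg] <;> positivity
    · refine Filter.Eventually.of_forall fun x => ?_
      have : ∀ᶠ n : ℕ in atTop, x < (n:ℝ)+1 := by
        filter_upwards [tendsto_natCast_atTop_atTop.eventually_gt_atTop (x-1)] with n hn
        linarith
      refine Tendsto.congr' ?_ tendsto_const_nhds
      filter_upwards [this] with n hn
      rw [Set.indicator_apply, if_neg]
      intro h
      rw [Set.mem_Icc] at h
      linarith [h.1]
  have hbound : ∀ n : ℕ, |b n * F (b n)| ≤ I n := by
    intro n
    have hconst : ∫ _ in Icc ((n:ℝ)+1) ((n:ℝ)+2), |b n * F (b n)| = |b n * F (b n)| := by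
      rw [setIntegral_const]
      rw [Real.volume_real_Icc]
      norm_num
    rw [← hconst]
    apply setIntegral_mono_on
    · exact integrableOn_const (by rw [Real.volume_Icc]; norm_num)
    · exact h1.abs.integrableOn
    · exact measurableSet_Icc
    · exact fun z hz => hble n z hz
  have hzero : Tendsto (fun n => b n * F (b n)) atTop (𝓝 0) := by
    apply squeeze_zero_norm (fun n => ?_) hItend
    rw [Real.norm_eq_abs]
    exact hbound n
  have habs : Tendsto (fun n => |b n * F (b n)|) atTop (𝓝 0) := by simpa using hzero.abs
  have hF0 : Tendsto (fun n => F (b n)) atTop (𝓝 0) := by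
    apply squeeze_zero_norm (fun n => ?_) habs
    have h1n : (1:ℝ) ≤ |b n| := by
      have := hb1 n
      have h0 : (0:ℝ) ≤ (n:ℝ) := Nat.cast_nonneg n
      rw [abs_of_pos (by linarith)]
      linarith
    calc ‖F (b n)‖ = |F (b n)| := rfl
      _ ≤ |b n| * |F (b n)| := le_mul_of_one_le_left (abs_nonneg _) h1n
      _ = |b n * F (b n)| := (abs_mul _ _).symm
  exact ⟨b, htop, hF0⟩


lemma integrable_expnegsq : Integrable (fun s : ℝ => rexp (-s^2/2)) (volume : Measure ℝ) := by
  have := integrable_exp_neg_mul_sq (b := (1:ℝ)/2) (by norm_num)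
  exact this.congr (Filter.Eventually.of_forall fun x => by ring_nf)

lemma integral_expnegsq : ∫ s : ℝ, rexp (-s^2/2) = √(2*π) := by
  have := integral_gaussian ((1:ℝ)/2)
  rw [show π / ((1:ℝ)/2) = 2*π by ring] at this
  rw [← this]
  refine integral_congr_ae (Filter.Eventually.of_forall fun x => ?_)
  ring_nf

lemma tail_eq (t : ℝ) : ∫ s in Ioi t, s * rexp (-s^2/2) = rexp (-t^2/2) := by
  have hderiv : ∀ x ∈ Ioi t, HasDerivAt (fun s : ℝ => -rexp (-s^2/2)) (x * rexp (-x^2/2)) x := by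
    intro x _
    have h : HasDerivAt (fun s : ℝ => -s^2/2) (-x) x := by
      have := ((hasDerivAt_pow 2 x).neg).div_const 2
      simpa using this.congr_deriv (by ring)
    have := h.exp.neg
    exact (this.congr_deriv (by ring) : HasDerivAt (fun s : ℝ => -rexp (-s^2/2)) (x * rexp (-x^2/2)) x)
  have hint : IntegrableOn (fun s : ℝ => s * rexp (-s^2/2)) (Ioi t) := by
    have := integrable_mul_exp_neg_mul_sq (b := (1:ℝ)/2) (by norm_num)
    exact (this.congr (Filter.Eventually.of_forall fun x => by ring_nf)).integrableOn
  have hcont : ContinuousWithinAt (fun s : ℝ => -rexp (-s^2/2)) (Ici t) t := by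
    apply Continuous.continuousWithinAt; continuity
  have hsq : Tendsto (fun s : ℝ => -s^2/2) atTop atBot := by
    have h2 : Tendsto (fun s : ℝ => s^2/2) atTop atTop :=
      (tendsto_pow_atTop two_ne_zero).atTop_div_const (by norm_num)
    have := tendsto_neg_atBot_iff.mpr h2
    exact this.congr (fun x => by ring)
  have htend : Tendsto (fun s : ℝ => -rexp (-s^2/2)) atTop (𝓝 0) := by
    rw [show (0:ℝ) = -0 by ring]
    exact (Real.tendsto_exp_atBot.comp hsq).neg
  have := integral_Ioi_of_hasDerivAt_of_tendsto hcont hderiv hint htend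
  simpa using this

lemma integrable_shift (t : ℝ) :
    Integrable (fun s : ℝ => rexp (-(s-t)^2/2)) (volume : Measure ℝ) :=
  integrable_expnegsq.comp_sub_right t

lemma fact_right {t : ℝ} (ht : 0 ≤ t) :
    rexp (t^2/2) * ∫ s in Ioi t, rexp (-s^2/2) ≤ √(2*π) := by
  rw [← integral_const_mul]
  have int1 : Integrable (fun s : ℝ => rexp (t^2/2) * rexp (-s^2/2)) (volume : Measure ℝ) :=
    integrable_expnegsq.const_mul _
  have int2 := integrable_shift t
  calc ∫ s in Ioi t, rexp (t^2/2) * rexp (-s^2/2)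
      ≤ ∫ s in Ioi t, rexp (-(s-t)^2/2) := by
        apply setIntegral_mono_on int1.integrableOn int2.integrableOn measurableSet_Ioi
        intro s hs
        rw [← Real.exp_add]
        apply Real.exp_le_exp.mpr
        have : t ≤ s := le_of_lt hs
        nlinarith
    _ ≤ ∫ s : ℝ, rexp (-(s-t)^2/2) :=
        setIntegral_le_integral int2 (Filter.Eventually.of_forall fun s => (Real.exp_pos _).le)
    _ = ∫ s : ℝ, rexp (-s^2/2) := integral_sub_right_eq_self (fun u => rexp (-u^2/2)) t
    _ = √(2*π) := integral_expnegsq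

lemma fact_right' {t : ℝ} (ht : 0 ≤ t) :
    t * (rexp (t^2/2) * ∫ s in Ioi t, rexp (-s^2/2)) ≤ 1 := by
  have hint : IntegrableOn (fun s : ℝ => s * rexp (-s^2/2)) (Ioi t) := by
    have := integrable_mul_exp_neg_mul_sq (b := (1:ℝ)/2) (by norm_num)
    exact (this.congr (Filter.Eventually.of_forall fun x => by ring_nf)).integrableOn
  have h1 : t * ∫ s in Ioi t, rexp (-s^2/2) ≤ rexp (-t^2/2) := by
    rw [← integral_const_mul, ← tail_eq t]
    apply setIntegral_mono_on (integrable_expnegsq.const_mul _).integrableOn hint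
      measurableSet_Ioi
    intro s hs
    have hts : t ≤ s := le_of_lt hs
    exact mul_le_mul_of_nonneg_right hts (Real.exp_pos _).le
  calc t * (rexp (t^2/2) * ∫ s in Ioi t, rexp (-s^2/2))
      = rexp (t^2/2) * (t * ∫ s in Ioi t, rexp (-s^2/2)) := by ring
    _ ≤ rexp (t^2/2) * rexp (-t^2/2) :=
        mul_le_mul_of_nonneg_left h1 (Real.exp_pos _).le
    _ = 1 := by rw [← Real.exp_add, show t^2/2 + -t^2/2 = 0 by ring, Real.exp_zero]

lemma Iic_eq_Ioi (t : ℝ) : ∫ s in Iic t, rexp (-s^2/2) = ∫ s in Ioi (-t), rexp (-s^2/2) := by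
  have := integral_comp_neg_Ioi (c := -t) (f := fun s : ℝ => rexp (-s^2/2))
  rw [neg_neg] at this
  rw [← this]
  refine setIntegral_congr_fun measurableSet_Ioi fun s _ => ?_
  ring_nf

lemma fact_left {t : ℝ} (ht : t ≤ 0) :
    rexp (t^2/2) * ∫ s in Iic t, rexp (-s^2/2) ≤ √(2*π) := by
  rw [Iic_eq_Ioi, show t^2 = (-t)^2 by ring]
  exact fact_right (by linarith)

lemma fact_left' {t : ℝ} (ht : t ≤ 0) :
    (-t) * (rexp (t^2/2) * ∫ s in Iic t, rexp (-s^2/2)) ≤ 1 := by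
  rw [Iic_eq_Ioi, show t^2 = (-t)^2 by ring]
  exact fact_right' (by linarith)


lemma hasDerivAt_expnegsq (x : ℝ) :
    HasDerivAt (fun s : ℝ => rexp (-s^2/2)) (-x * rexp (-x^2/2)) x := by
  have h : HasDerivAt (fun s : ℝ => -s^2/2) (-x) x := by
    have := ((hasDerivAt_pow 2 x).neg).div_const 2
    simpa using this.congr_deriv (by ring)
  simpa [mul_comm] using h.exp

lemma forward_core (f : ℝ → ℝ) (hf : Continuous f) (S : Finset ℝ)
    (hd : ∀ x ∉ S, DifferentiableAt ℝ f x)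
    (h1 : Integrable (fun x => x * f x * rexp (-x^2/2)) (volume : Measure ℝ))
    (h2 : Integrable (fun x => deriv f x * rexp (-x^2/2)) (volume : Measure ℝ)) :
    ∫ x, deriv f x * rexp (-x^2/2) = ∫ x, x * f x * rexp (-x^2/2) := by
  set F : ℝ → ℝ := fun x => f x * rexp (-x^2/2) with hFdef
  set G : ℝ → ℝ := fun x => deriv f x * rexp (-x^2/2) - x * f x * rexp (-x^2/2) with hGdef
  have hFc : Continuous F := hf.mul (by continuity)
  have hGint : Integrable G (volume : Measure ℝ) := h2.sub h1
  have hFd : ∀ x ∉ S, HasDerivAt F (G x) x := by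
    intro x hx
    have hfd : HasDerivAt f (deriv f x) x := (hd x hx).hasDerivAt
    have := hfd.mul (hasDerivAt_expnegsq x)
    exact (this.congr_deriv (by ring) : HasDerivAt (fun x => f x * rexp (-x^2/2)) (deriv f x * rexp (-x^2/2) - x * f x * rexp (-x^2/2)) x)
  have key := ftc_finset S F G hFc hFd hGint
  -- sequences
  have hxF : Integrable (fun x => x * F x) (volume : Measure ℝ) := by
    simpa [hFdef, mul_assoc] using h1
  obtain ⟨b, hbtop, hbF⟩ := exists_seq F hFc hxF
  have hxF' : Integrable (fun x => x * F (-x)) (volume : Measure ℝ) := by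
    have : Integrable (fun x => -x * F (-x)) (volume : Measure ℝ) := hxF.comp_neg
    exact this.neg.congr (Filter.Eventually.of_forall fun x => by simp)
  obtain ⟨a, hatop, haF⟩ := exists_seq (fun x => F (-x)) (hFc.comp continuous_neg) hxF'
  have hatop' : Tendsto (fun n => -(a n)) atTop atBot := tendsto_neg_atBot_iff.mpr hatop
  have hlim : Tendsto (fun n => ∫ y in (-(a n))..(b n), G y) atTop (𝓝 (∫ x, G x)) :=
    intervalIntegral_tendsto_integral hGint hatop' hbtop
  have hab : ∀ᶠ n in atTop, -(a n) ≤ b n := by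
    filter_upwards [hatop.eventually_ge_atTop 0, hbtop.eventually_ge_atTop 0] with n h1 h2
    linarith
  have heq : ∀ᶠ n in atTop, (∫ y in (-(a n))..(b n), G y) = F (b n) - F (-(a n)) := by
    filter_upwards [hab] with n hn
    exact key _ _ hn
  have hlim2 : Tendsto (fun n => F (b n) - F (-(a n))) atTop (𝓝 0) := by
    simpa using hbF.sub haF
  have hG0 : ∫ x, G x = 0 := tendsto_nhds_unique (hlim.congr' heq) hlim2
  have := integral_sub h2 h1
  rw [← hGdef] at this
  rw [hG0] at this
  linarith [this]


lemma stein_sol (h : ℝ → ℝ) (hc : Continuous h) (M : ℝ) (hM : ∀ x, |h x| ≤ M) :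
    ∃ f : ℝ → ℝ, Continuous f ∧ (∀ x, DifferentiableAt ℝ f x) ∧
      deriv f = (fun t => t * f t + (h t - ∫ x, h x ∂(gaussianReal 0 1))) ∧
      (∀ t, |t * f t| ≤ 2*M) ∧ (∀ t, |f t| ≤ 2*M*√(2*π)) ∧
      (∀ t, |deriv f t| ≤ 4*M) := by
  have hM0 : 0 ≤ M := (abs_nonneg _).trans (hM 0)
  set c : ℝ := ∫ x, h x ∂(gaussianReal 0 1) with hc_def
  have hcabs : |c| ≤ M := by
    have hint : Integrable h (gaussianReal 0 1) := by
      refine Integrable.mono' (integrable_const M) hc.aestronglyMeasurable ?_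
      exact Filter.Eventually.of_forall fun x => hM x
    calc |c| ≤ ∫ x, |h x| ∂(gaussianReal 0 1) := by
          simpa using norm_integral_le_integral_norm (μ := gaussianReal 0 1) h
      _ ≤ ∫ _x, M ∂(gaussianReal 0 1) := integral_mono hint.abs (integrable_const M)
          (fun x => hM x)
      _ = M := by simp
  set ψ : ℝ → ℝ := fun s => (h s - c) * rexp (-s^2/2) with hψ_def
  have hψcont : Continuous ψ := (hc.sub continuous_const).mul (by continuity)
  have hψbound : ∀ s, |ψ s| ≤ 2*M * rexp (-s^2/2) := by
    intro s
    rw [hψ_def, abs_mul, abs_of_pos (Real.exp_pos _)]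
    apply mul_le_mul_of_nonneg_right _ (Real.exp_pos _).le
    calc |h s - c| ≤ |h s| + |c| := abs_sub _ _
      _ ≤ M + M := add_le_add (hM s) hcabs
      _ = 2*M := by ring
  have hψint : Integrable ψ (volume : Measure ℝ) := by
    refine Integrable.mono' (integrable_expnegsq.const_mul (2*M)) hψcont.aestronglyMeasurable ?_
    exact Filter.Eventually.of_forall fun s => hψbound s
  have htotal : ∫ s, ψ s = 0 := by
    have e1 : Integrable (fun s => h s * rexp (-s^2/2)) (volume : Measure ℝ) := by
      refine Integrable.mono' (integrable_expnegsq.const_mul M) (hc.mul (by continuity)).aestronglyMeasurable ?_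
      refine Filter.Eventually.of_forall fun s => ?_
      rw [norm_mul, Real.norm_eq_abs (rexp _), abs_of_pos (Real.exp_pos _)]
      exact mul_le_mul_of_nonneg_right (hM s) (Real.exp_pos _).le
    have e2 : Integrable (fun s => c * rexp (-s^2/2)) (volume : Measure ℝ) :=
      integrable_expnegsq.const_mul c
    have hsplit : ∫ s, ψ s = (∫ s, h s * rexp (-s^2/2)) - ∫ s, c * rexp (-s^2/2) := by
      rw [← integral_sub e1 e2]
      refine integral_congr_ae (Filter.Eventually.of_forall fun s => ?_)
      rw [hψ_def]; ring
    have hpdf : (∫ s, h s * rexp (-s^2/2)) = √(2*π) * c := by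
      have h0 : c = ∫ x, gaussianPDFReal 0 1 x * h x := integral_gauss_eq h
      have h1 : c = (√(2*π))⁻¹ * ∫ x, h x * rexp (-x^2/2) := by
        rw [h0, ← integral_const_mul]
        refine integral_congr_ae (Filter.Eventually.of_forall fun x => ?_)
        simp only [pdf_eq]; ring
      have hsqrt : (0:ℝ) < √(2*π) := Real.sqrt_pos.mpr (by positivity)
      rw [h1]
      field_simp
    rw [hsplit, hpdf, integral_const_mul, integral_expnegsq]
    ring
  -- the primitive of ψ
  set G : ℝ → ℝ := fun t => ∫ s in Iic t, ψ s with hG_def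
  have hG_Ioi : ∀ t, G t = -∫ s in Ioi t, ψ s := by
    intro t
    have := integral_add_compl (measurableSet_Iic (a := t)) hψint
    rw [Set.compl_Iic] at this
    rw [htotal] at this
    rw [hG_def]
    linarith [this]
  have hGderiv : ∀ t, HasDerivAt G (ψ t) t := by
    intro t
    have hrepr : G = fun t => (∫ s in Iic (0:ℝ), ψ s) + ∫ s in (0:ℝ)..t, ψ s := by
      funext u
      have := intervalIntegral.integral_Iic_sub_Iic (μ := volume) (f := ψ) (a := (0:ℝ)) (b := u)
        hψint.integrableOn hψint.integrableOn
      rw [hG_def]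
      linarith [this]
    rw [hrepr]
    have hd : HasDerivAt (fun u => ∫ s in (0:ℝ)..u, ψ s) (ψ t) t :=
      intervalIntegral.integral_hasDerivAt_right hψint.intervalIntegrable
        hψcont.stronglyMeasurable.stronglyMeasurableAtFilter hψcont.continuousAt
    simpa using hd.const_add (∫ s in Iic (0:ℝ), ψ s)
  set f : ℝ → ℝ := fun t => rexp (t^2/2) * G t with hf_def
  have hexp_deriv : ∀ t : ℝ, HasDerivAt (fun s : ℝ => rexp (s^2/2)) (t * rexp (t^2/2)) t := by
    intro t
    have hp : HasDerivAt (fun s : ℝ => s^2/2) t t := by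
      have := (hasDerivAt_pow 2 t).div_const 2
      simpa using this.congr_deriv (by ring)
    simpa [mul_comm] using hp.exp
  have hcancel : ∀ t : ℝ, rexp (t^2/2) * rexp (-t^2/2) = 1 := by
    intro t
    rw [← Real.exp_add, show t^2/2 + -t^2/2 = 0 by ring, Real.exp_zero]
  have hfderiv : ∀ t, HasDerivAt f (t * f t + (h t - c)) t := by
    intro t
    have := (hexp_deriv t).mul (hGderiv t)
    change HasDerivAt f _ t at this
    refine this.congr_deriv ?_
    simp only [hf_def, hψ_def]
    linear_combination (h t - c) * hcancel t
  have hfdiff : ∀ x, DifferentiableAt ℝ f x := fun x => (hfderiv x).differentiableAt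
  have hfcont : Continuous f := by
    rw [continuous_iff_continuousAt]; exact fun x => (hfdiff x).continuousAt
  have hderiv_eq : deriv f = fun t => t * f t + (h t - c) :=
    funext fun t => (hfderiv t).deriv
  -- bounds
  have hIoi_nonneg : ∀ t : ℝ, 0 ≤ ∫ s in Ioi t, rexp (-s^2/2) :=
    fun t => setIntegral_nonneg measurableSet_Ioi fun s _ => (Real.exp_pos _).le
  have hIic_nonneg : ∀ t : ℝ, 0 ≤ ∫ s in Iic t, rexp (-s^2/2) :=
    fun t => setIntegral_nonneg measurableSet_Iic fun s _ => (Real.exp_pos _).le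
  have hGb_right : ∀ t : ℝ, |G t| ≤ 2*M * ∫ s in Ioi t, rexp (-s^2/2) := by
    intro t
    rw [hG_Ioi t, abs_neg]
    calc |∫ s in Ioi t, ψ s| ≤ ∫ s in Ioi t, |ψ s| := by
          simpa using norm_integral_le_integral_norm (μ := volume.restrict (Ioi t)) ψ
      _ ≤ ∫ s in Ioi t, 2*M * rexp (-s^2/2) := by
          apply setIntegral_mono_on hψint.abs.integrableOn
            ((integrable_expnegsq.const_mul (2*M)).integrableOn) measurableSet_Ioi
          exact fun s _ => hψbound s
      _ = 2*M * ∫ s in Ioi t, rexp (-s^2/2) := integral_const_mul _ _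
  have hGb_left : ∀ t : ℝ, |G t| ≤ 2*M * ∫ s in Iic t, rexp (-s^2/2) := by
    intro t
    rw [hG_def]
    calc |∫ s in Iic t, ψ s| ≤ ∫ s in Iic t, |ψ s| := by
          simpa using norm_integral_le_integral_norm (μ := volume.restrict (Iic t)) ψ
      _ ≤ ∫ s in Iic t, 2*M * rexp (-s^2/2) := by
          apply setIntegral_mono_on hψint.abs.integrableOn
            ((integrable_expnegsq.const_mul (2*M)).integrableOn) measurableSet_Iic
          exact fun s _ => hψbound s
      _ = 2*M * ∫ s in Iic t, rexp (-s^2/2) := integral_const_mul _ _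
  have hfb : ∀ t, |f t| ≤ 2*M*√(2*π) := by
    intro t
    rw [hf_def, abs_mul, abs_of_pos (Real.exp_pos _)]
    rcases le_total 0 t with ht | ht
    · calc rexp (t^2/2) * |G t| ≤ rexp (t^2/2) * (2*M * ∫ s in Ioi t, rexp (-s^2/2)) :=
            mul_le_mul_of_nonneg_left (hGb_right t) (Real.exp_pos _).le
        _ = 2*M * (rexp (t^2/2) * ∫ s in Ioi t, rexp (-s^2/2)) := by ring
        _ ≤ 2*M * √(2*π) := by
            apply mul_le_mul_of_nonneg_left (fact_right ht) (by linarith)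
    · calc rexp (t^2/2) * |G t| ≤ rexp (t^2/2) * (2*M * ∫ s in Iic t, rexp (-s^2/2)) :=
            mul_le_mul_of_nonneg_left (hGb_left t) (Real.exp_pos _).le
        _ = 2*M * (rexp (t^2/2) * ∫ s in Iic t, rexp (-s^2/2)) := by ring
        _ ≤ 2*M * √(2*π) := by
            apply mul_le_mul_of_nonneg_left (fact_left ht) (by linarith)
  have htfb : ∀ t, |t * f t| ≤ 2*M := by
    intro t
    rw [hf_def, show t * (rexp (t^2/2) * G t) = (rexp (t^2/2) * G t) * t by ring, abs_mul,
      abs_mul, abs_of_pos (Real.exp_pos _)]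
    rcases le_total 0 t with ht | ht
    · rw [abs_of_nonneg ht]
      calc rexp (t^2/2) * |G t| * t
          ≤ rexp (t^2/2) * (2*M * ∫ s in Ioi t, rexp (-s^2/2)) * t := by
            apply mul_le_mul_of_nonneg_right _ ht
            exact mul_le_mul_of_nonneg_left (hGb_right t) (Real.exp_pos _).le
        _ = 2*M * (t * (rexp (t^2/2) * ∫ s in Ioi t, rexp (-s^2/2))) := by ring
        _ ≤ 2*M * 1 := mul_le_mul_of_nonneg_left (fact_right' ht) (by linarith)
        _ = 2*M := mul_one _
    · rw [abs_of_nonpos ht]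
      calc rexp (t^2/2) * |G t| * (-t)
          ≤ rexp (t^2/2) * (2*M * ∫ s in Iic t, rexp (-s^2/2)) * (-t) := by
            apply mul_le_mul_of_nonneg_right _ (by linarith)
            exact mul_le_mul_of_nonneg_left (hGb_left t) (Real.exp_pos _).le
        _ = 2*M * ((-t) * (rexp (t^2/2) * ∫ s in Iic t, rexp (-s^2/2))) := by ring
        _ ≤ 2*M * 1 := mul_le_mul_of_nonneg_left (fact_left' ht) (by linarith)
        _ = 2*M := mul_one _
  have hdb : ∀ t, |deriv f t| ≤ 4*M := by
    intro t
    rw [hderiv_eq]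
    calc |t * f t + (h t - c)| ≤ |t * f t| + |h t - c| := abs_add_le _ _
      _ ≤ 2*M + (|h t| + |c|) := add_le_add (htfb t) (abs_sub _ _)
      _ ≤ 2*M + (M + M) := by have := hM t; linarith
      _ = 4*M := by ring
  exact ⟨f, hfcont, hfdiff, hderiv_eq, htfb, hfb, hdb⟩


theorem steins_lemma
    {Ω : Type*} [MeasurableSpace Ω] (μ : Measure Ω) [IsProbabilityMeasure μ]
    (Z : Ω → ℝ) (hZ : Measurable Z) (hZint : Integrable Z μ) :
    Measure.map Z μ = gaussianReal 0 1 ↔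
      ∀ f : ℝ → ℝ, Continuous f →
        (∃ S : Finset ℝ, (∀ x ∉ S, DifferentiableAt ℝ f x) ∧
          ContinuousOn (deriv f) (↑S : Set ℝ)ᶜ) →
        Integrable (fun x => deriv f x) (gaussianReal 0 1) →
        Integrable (fun ω => Z ω * f (Z ω)) μ →
        Integrable (fun ω => deriv f (Z ω)) μ →
        ∫ ω, (Z ω * f (Z ω) - deriv f (Z ω)) ∂μ = 0 := by
  have hsqrt : (0:ℝ) < √(2*π) := Real.sqrt_pos.mpr (by positivity)
  constructor
  · -- forward direction
    intro hmap f hf hS hint_deriv hint_zf hint_dz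
    obtain ⟨S, hdS, _hcder⟩ := hS
    have hg : Measurable fun x : ℝ => x * f x - deriv f x :=
      (measurable_id.mul hf.measurable).sub (measurable_deriv f)
    have hmap_int : ∫ ω, (Z ω * f (Z ω) - deriv f (Z ω)) ∂μ
        = ∫ x, (x * f x - deriv f x) ∂(gaussianReal 0 1) := by
      rw [← hmap]
      exact (integral_map hZ.aemeasurable hg.aestronglyMeasurable).symm
    rw [hmap_int]
    -- transfer integrability
    have hZf : Integrable (fun x => x * f x) (gaussianReal 0 1) := by
      rw [← hmap]
      refine (integrable_map_measure ?_ hZ.aemeasurable).mpr hint_zf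
      exact (measurable_id.mul hf.measurable).aestronglyMeasurable
    have h1 : Integrable (fun x => x * f x * rexp (-x^2/2)) (volume : Measure ℝ) := by
      have := (integrable_gauss_iff (fun x => x * f x)).mp hZf
      have h2 := this.const_mul (√(2*π))
      refine h2.congr (Filter.Eventually.of_forall fun x => ?_)
      simp only [pdf_eq]
      field_simp
    have h2 : Integrable (fun x => deriv f x * rexp (-x^2/2)) (volume : Measure ℝ) := by
      have := (integrable_gauss_iff (deriv f)).mp hint_deriv
      have h2 := this.const_mul (√(2*π))
      refine h2.congr (Filter.Eventually.of_forall fun x => ?_)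
      simp only [pdf_eq]
      field_simp
    have hcore := forward_core f hf S hdS h1 h2
    rw [integral_gauss_eq]
    have hsub : Integrable (fun x => gaussianPDFReal 0 1 x * (x * f x)) (volume : Measure ℝ) :=
      (integrable_gauss_iff _).mp hZf
    have hsub2 : Integrable (fun x => gaussianPDFReal 0 1 x * deriv f x) (volume : Measure ℝ) :=
      (integrable_gauss_iff _).mp hint_deriv
    have hsplit : ∫ x, gaussianPDFReal 0 1 x * (x * f x - deriv f x)
        = (∫ x, gaussianPDFReal 0 1 x * (x * f x)) - ∫ x, gaussianPDFReal 0 1 x * deriv f x := by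
      rw [← integral_sub hsub hsub2]
      refine integral_congr_ae (Filter.Eventually.of_forall fun x => ?_)
      ring
    rw [hsplit]
    have e1 : ∫ x, gaussianPDFReal 0 1 x * (x * f x)
        = (√(2*π))⁻¹ * ∫ x, x * f x * rexp (-x^2/2) := by
      rw [← integral_const_mul]
      refine integral_congr_ae (Filter.Eventually.of_forall fun x => ?_)
      simp only [pdf_eq]; ring
    have e2 : ∫ x, gaussianPDFReal 0 1 x * deriv f x
        = (√(2*π))⁻¹ * ∫ x, deriv f x * rexp (-x^2/2) := by
      rw [← integral_const_mul]
      refine integral_congr_ae (Filter.Eventually.of_forall fun x => ?_)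
      simp only [pdf_eq]; ring
    rw [e1, e2, hcore]
    ring
  · -- reverse direction
    intro hyp
    have hmapP : IsProbabilityMeasure (Measure.map Z μ) :=
      Measure.isProbabilityMeasure_map hZ.aemeasurable
    have key : ∀ (h : ℝ → ℝ) (M : ℝ), Continuous h → (∀ x, |h x| ≤ M) →
        ∫ x, h x ∂(Measure.map Z μ) = ∫ x, h x ∂(gaussianReal 0 1) := by
      intro h M hc hM
      have hM0 : 0 ≤ M := (abs_nonneg _).trans (hM 0)
      obtain ⟨f, hfc, hfd, hfd_eq, htfb, hfb, hdb⟩ := stein_sol h hc M hM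
      set c : ℝ := ∫ x, h x ∂(gaussianReal 0 1) with hc_def
      have hderiv_cont : Continuous (deriv f) := by
        rw [hfd_eq]
        exact ((continuous_id.mul hfc).add (hc.sub continuous_const))
      have int1 : Integrable (fun x => deriv f x) (gaussianReal 0 1) := by
        refine Integrable.mono' (integrable_const (4*M)) hderiv_cont.aestronglyMeasurable ?_
        exact Filter.Eventually.of_forall fun x => hdb x
      have int2 : Integrable (fun ω => Z ω * f (Z ω)) μ := by
        refine Integrable.mono' (integrable_const (2*M))
          ((hZ.mul (hfc.measurable.comp hZ)).aestronglyMeasurable) ?_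
        exact Filter.Eventually.of_forall fun ω => htfb (Z ω)
      have int3 : Integrable (fun ω => deriv f (Z ω)) μ := by
        refine Integrable.mono' (integrable_const (4*M))
          ((hderiv_cont.measurable.comp hZ).aestronglyMeasurable) ?_
        exact Filter.Eventually.of_forall fun ω => hdb (Z ω)
      have hzero := hyp f hfc ⟨∅, fun x _ => hfd x, by
        exact hderiv_cont.continuousOn⟩ int1 int2 int3
      have heq : ∀ ω, Z ω * f (Z ω) - deriv f (Z ω) = c - h (Z ω) := by
        intro ω
        rw [hfd_eq]
        simp only [← hc_def]
        ring
      have hhZint : Integrable (fun ω => h (Z ω)) μ := by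
        refine Integrable.mono' (integrable_const M)
          ((hc.measurable.comp hZ).aestronglyMeasurable) ?_
        exact Filter.Eventually.of_forall fun ω => hM (Z ω)
      have hzero2 : ∫ ω, (c - h (Z ω)) ∂μ = 0 := by
        rw [← hzero]
        exact integral_congr_ae (Filter.Eventually.of_forall fun ω => (heq ω).symm)
      rw [integral_sub (integrable_const c) hhZint, integral_const] at hzero2
      simp only [measure_univ, probReal_univ, ENNReal.toReal_one, smul_eq_mul, one_mul] at hzero2
      have hZh : ∫ ω, h (Z ω) ∂μ = c := by linarith
      rw [integral_map hZ.aemeasurable hc.aestronglyMeasurable, hZh]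
    apply ext_of_forall_lintegral_eq_of_IsFiniteMeasure
    intro f₀
    obtain ⟨Cb, hCb⟩ := f₀.bounded
    set h : ℝ → ℝ := fun x => ((f₀ x : ℝ)) with hh_def
    have hc : Continuous h := NNReal.continuous_coe.comp f₀.continuous
    set M : ℝ := ((f₀ 0 : ℝ)) + Cb with hM_def
    have hM : ∀ x, |h x| ≤ M := by
      intro x
      have h1 : dist (f₀ x) (f₀ 0) ≤ Cb := hCb x 0
      rw [NNReal.dist_eq] at h1
      have h2 : |h x| = h x := abs_of_nonneg (f₀ x).2
      have := abs_sub_abs_le_abs_sub ((f₀ x : ℝ)) ((f₀ 0 : ℝ))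
      rw [h2, hM_def]
      have h3 : (f₀ x : ℝ) - (f₀ 0 : ℝ) ≤ |(f₀ x : ℝ) - (f₀ 0 : ℝ)| := le_abs_self _
      simp only [hh_def]
      linarith
    have intmap : Integrable (fun x => ((f₀ x : ℝ))) (Measure.map Z μ) := by
      refine Integrable.mono' (integrable_const M) hc.aestronglyMeasurable ?_
      exact Filter.Eventually.of_forall fun x => hM x
    have intgauss : Integrable (fun x => ((f₀ x : ℝ))) (gaussianReal 0 1) := by
      refine Integrable.mono' (integrable_const M) hc.aestronglyMeasurable ?_
      exact Filter.Eventually.of_forall fun x => hM x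
    rw [lintegral_coe_eq_integral f₀ intmap, lintegral_coe_eq_integral f₀ intgauss]
    rw [key h M hc hM]
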